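/- Let B ⊆ A be an extension of k-algebras with (A/B)^{⊗_B n} = 0 and A/B projective as a right B-module, and let X be a left A-module. Then there is an exact sequence of left A-modules 0 → A ⊗_B Y_{n-1} → … → A ⊗_B Y_1 → A ⊗_B Y_0 → X → 0, where Y_i = (A/B)^{⊗_B i} ⊗_B X. -/

import Mathlib

/- STATEMENT 16: Let `B ⊆ A` be an extension of `k`-algebras with `(A/B)^{⊗_B n} = 0` and
`A/B` projective as a right `B`-module, and let `X` be a left `A`-module.  Then there is an
exact sequence of left `A`-modules
`0 → A ⊗_B Y_{n-1} → ⋯ → A ⊗_B Y_1 → A ⊗_B Y_0 → X → 0`,  where `Y_i = (A/B)^{⊗_B i} ⊗_B X`.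

All tensor products over the (noncommutative) ring `B` are realised as quotients of tensor
products over `ℤ` by the `B`-balancing relations. -/

universe u v

open TensorProduct

noncomputable def Wrec (M : Type v) [AddCommGroup M] : ℕ → Σ (T : Type v), AddCommGroup T
  | 0 => ⟨M, inferInstance⟩
  | n+1 => let p := Wrec M n; letI := p.2; ⟨M ⊗[ℤ] p.1, inferInstance⟩

def Wpow (M : Type v) [AddCommGroup M] (n : ℕ) : Type v := (Wrec M n).1

noncomputable instance (M : Type v) [AddCommGroup M] (n : ℕ) : AddCommGroup (Wpow M n) :=
  (Wrec M n).2

noncomputable def Lact (B : Type*) [Ring B] (M : Type v) [AddCommGroup M] [Module B M] :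
    (n : ℕ) → B → Wpow M n →ₗ[ℤ] Wpow M n
  | 0 => fun b => (DistribSMul.toAddMonoidHom M b).toIntLinearMap
  | n+1 => fun b =>
      (LinearMap.rTensor (Wpow M n) ((DistribSMul.toAddMonoidHom M b).toIntLinearMap) :
        (M ⊗[ℤ] Wpow M n) →ₗ[ℤ] (M ⊗[ℤ] Wpow M n))

noncomputable def RelW (B : Type*) [Ring B] (M : Type v) [AddCommGroup M] [Module B M] [Module Bᵐᵒᵖ M] :
    (n : ℕ) → Submodule ℤ (Wpow M n)
  | 0 => ⊥
  | n+1 => Submodule.span ℤ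
      ({x : M ⊗[ℤ] Wpow M n | ∃ (b : B) (m : M) (w : Wpow M n),
          x = (MulOpposite.op b • m) ⊗ₜ[ℤ] w - m ⊗ₜ[ℤ] (Lact B M n b w)} ∪
       {x : M ⊗[ℤ] Wpow M n | ∃ (m : M) (w : Wpow M n), w ∈ RelW B M n ∧ x = m ⊗ₜ[ℤ] w})

/-- `TPowB B M n` : the `(n+1)`-fold tensor power of the `B`-bimodule `M` over `B`. -/
def TPowB (B : Type*) [Ring B] (M : Type v) [AddCommGroup M] [Module B M] [Module Bᵐᵒᵖ M]
    (n : ℕ) :=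
  Wpow M n ⧸ RelW B M n

section

variable (k : Type u) [CommRing k]
  (B : Type v) [Ring B] [Algebra k B] (A : Type v) [Ring A] [Algebra k A]
  (f : B →ₐ[k] A)
  [Module (B ⊗[k] Bᵐᵒᵖ) A]

/-- `A/B` as a `B`-bimodule. -/
def Abar := A ⧸ Submodule.span (B ⊗[k] Bᵐᵒᵖ) (Set.range ⇑f)

noncomputable instance : AddCommGroup (Abar k B A f) :=
  inferInstanceAs (AddCommGroup (A ⧸ Submodule.span (B ⊗[k] Bᵐᵒᵖ) (Set.range ⇑f)))

noncomputable instance : Module (B ⊗[k] Bᵐᵒᵖ) (Abar k B A f) :=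
  inferInstanceAs (Module (B ⊗[k] Bᵐᵒᵖ) (A ⧸ Submodule.span (B ⊗[k] Bᵐᵒᵖ) (Set.range ⇑f)))

noncomputable instance : Module B (Abar k B A f) :=
  Module.compHom (Abar k B A f)
    (Algebra.TensorProduct.includeLeft (R := k) (A := B) (B := Bᵐᵒᵖ) (S := k)).toRingHom

noncomputable instance : Module Bᵐᵒᵖ (Abar k B A f) :=
  Module.compHom (Abar k B A f)
    (Algebra.TensorProduct.includeRight (R := k) (A := B) (B := Bᵐᵒᵖ)).toRingHom

variable (X : Type v) [AddCommGroup X] [Module A X] [Module B X]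

/-- a bundled left `B`-module -/
structure PackB (B : Type v) [Ring B] where
  T : Type v
  [acg : AddCommGroup T]
  [mod : Module B T]

attribute [instance] PackB.acg PackB.mod

/-- `Yrec i` bundles `Y_i = (A/B)^{⊗_B i} ⊗_B X` as a left `B`-module. -/
noncomputable def Yrec : ℕ → PackB.{v} B
  | 0 => { T := X }
  | i+1 =>
      { T := ((Abar k B A f) ⊗[ℤ] (Yrec i).T) ⧸ Submodule.span B
          {z : (Abar k B A f) ⊗[ℤ] (Yrec i).T |
            ∃ (b : B) (m : Abar k B A f) (y : (Yrec i).T),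
              z = ((MulOpposite.op b) • m) ⊗ₜ[ℤ] y - m ⊗ₜ[ℤ] (b • y)} }

/-- `Yp i = (A/B)^{⊗_B i} ⊗_B X`. -/
def Yp (i : ℕ) : Type v := (Yrec k B A f X i).T

noncomputable instance (i : ℕ) : AddCommGroup (Yp k B A f X i) := (Yrec k B A f X i).acg
noncomputable instance (i : ℕ) : Module B (Yp k B A f X i) := (Yrec k B A f X i).mod

/-- `Ti i = A ⊗_B Y_i`, an induced left `A`-module. -/
def Ti (i : ℕ) :=
  (A ⊗[ℤ] Yp k B A f X i) ⧸ Submodule.span A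
    {z : A ⊗[ℤ] Yp k B A f X i | ∃ (a : A) (b : B) (y : Yp k B A f X i),
      z = (a * f b) ⊗ₜ[ℤ] y - a ⊗ₜ[ℤ] (b • y)}

noncomputable instance (i : ℕ) : AddCommGroup (Ti k B A f X i) :=
  inferInstanceAs (AddCommGroup
    ((A ⊗[ℤ] Yp k B A f X i) ⧸ Submodule.span A
      {z : A ⊗[ℤ] Yp k B A f X i | ∃ (a : A) (b : B) (y : Yp k B A f X i),
        z = (a * f b) ⊗ₜ[ℤ] y - a ⊗ₜ[ℤ] (b • y)}))

noncomputable instance (i : ℕ) : Module A (Ti k B A f X i) :=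
  inferInstanceAs (Module A
    ((A ⊗[ℤ] Yp k B A f X i) ⧸ Submodule.span A
      {z : A ⊗[ℤ] Yp k B A f X i | ∃ (a : A) (b : B) (y : Yp k B A f X i),
        z = (a * f b) ⊗ₜ[ℤ] y - a ⊗ₜ[ℤ] (b • y)}))


set_option linter.unusedSectionVars false

/-! ### Auxiliary general lemmas -/

lemma span_stable_le {R M' : Type*} [Ring R] [AddCommGroup M'] [Module R M']
    {S : Set M'} (hS : ∀ (r : R), ∀ s ∈ S, r • s ∈ S) :
    ∀ x ∈ Submodule.span R S, x ∈ Submodule.span ℤ S := by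
  intro x hx
  induction hx using Submodule.span_induction with
  | mem y hy => exact Submodule.subset_span hy
  | zero => exact zero_mem _
  | add a b _ _ iha ihb => exact add_mem iha ihb
  | smul r a ha iha =>
    clear ha
    induction iha using Submodule.span_induction with
    | mem y hy => exact Submodule.subset_span (hS r y hy)
    | zero => rw [smul_zero]; exact zero_mem _
    | add c d _ _ ihc ihd => rw [smul_add]; exact add_mem ihc ihd
    | smul n c _ ihc =>
      have h := smul_comm n r c
      rw [← h]
      exact Submodule.smul_mem _ n ihc

lemma vanish_on_spanR {R M' N' : Type*} [Ring R] [AddCommGroup M'] [Module R M']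
    [AddCommGroup N'] (ℓ : M' →ₗ[ℤ] N') {S : Set M'}
    (hS : ∀ (r : R), ∀ s ∈ S, r • s ∈ S)
    (h0 : ∀ s ∈ S, ℓ s = 0) : ∀ x ∈ Submodule.span R S, ℓ x = 0 := by
  intro x hx
  have hx' := span_stable_le hS x hx
  have hle : Submodule.span ℤ S ≤ LinearMap.ker ℓ :=
    Submodule.span_le.mpr (fun s hs => h0 s hs)
  exact hle hx'

noncomputable def liftQInt {R M' N' : Type*} [Ring R] [AddCommGroup M'] [Module R M']
    [AddCommGroup N'] (p : Submodule R M') (ℓ : M' →ₗ[ℤ] N') (h : ∀ x ∈ p, ℓ x = 0) :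
    (M' ⧸ p) →ₗ[ℤ] N' :=
  ((p.restrictScalars ℤ).liftQ ℓ (fun x hx => h x hx)) ∘ₗ
    (Submodule.Quotient.restrictScalarsEquiv ℤ p).symm.toLinearMap

lemma liftQInt_mk {R M' N' : Type*} [Ring R] [AddCommGroup M'] [Module R M']
    [AddCommGroup N'] (p : Submodule R M') (ℓ : M' →ₗ[ℤ] N') (h : ∀ x ∈ p, ℓ x = 0)
    (x : M') : liftQInt p ℓ h (Submodule.Quotient.mk x) = ℓ x := by
  simp only [liftQInt, LinearMap.comp_apply, LinearEquiv.coe_toLinearMap,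
    Submodule.Quotient.restrictScalarsEquiv_symm_mk, Submodule.liftQ_apply]
  rfl

/-! ### Basic structure of `Abar`, `Yp`, `Ti` -/

def Nf : Submodule (B ⊗[k] Bᵐᵒᵖ) A := Submodule.span (B ⊗[k] Bᵐᵒᵖ) (Set.range ⇑f)

noncomputable def mkM (a : A) : Abar k B A f := Submodule.Quotient.mk (p := Nf k B A f) a

lemma mkM_surj : Function.Surjective (mkM k B A f) := Submodule.Quotient.mk_surjective _

lemma mkM_add (a a' : A) : mkM k B A f (a + a') = mkM k B A f a + mkM k B A f a' := rfl

lemma mkM_fb (b : B) : mkM k B A f (f b) = 0 :=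
  (Submodule.Quotient.mk_eq_zero _).mpr (Submodule.subset_span ⟨b, rfl⟩)

lemma smul_mkM (hbim : ∀ (b b' : B) (x : A), (b ⊗ₜ[k] (MulOpposite.op b')) • x = f b * x * f b')
    (b : B) (a : A) : b • mkM k B A f a = mkM k B A f (f b * a) := by
  show ((Algebra.TensorProduct.includeLeft (R := k) (A := B) (B := Bᵐᵒᵖ) (S := k)).toRingHom b) •
    (Submodule.Quotient.mk (p := Nf k B A f) a) = _
  rw [← Submodule.Quotient.mk_smul]
  show Submodule.Quotient.mk ((b ⊗ₜ[k] (1 : Bᵐᵒᵖ)) • a) = _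
  rw [show ((1 : Bᵐᵒᵖ)) = MulOpposite.op (1 : B) from rfl, hbim, map_one, mul_one]
  rfl

lemma op_smul_mkM
    (hbim : ∀ (b b' : B) (x : A), (b ⊗ₜ[k] (MulOpposite.op b')) • x = f b * x * f b')
    (b : B) (a : A) : (MulOpposite.op b) • mkM k B A f a = mkM k B A f (a * f b) := by
  show ((Algebra.TensorProduct.includeRight (R := k) (A := B) (B := Bᵐᵒᵖ)).toRingHom
      (MulOpposite.op b)) • (Submodule.Quotient.mk (p := Nf k B A f) a) = _
  rw [← Submodule.Quotient.mk_smul]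
  show Submodule.Quotient.mk (((1 : B) ⊗ₜ[k] MulOpposite.op b) • a) = _
  rw [hbim, map_one, one_mul]
  rfl

lemma mem_Nf (hbim : ∀ (b b' : B) (x : A), (b ⊗ₜ[k] (MulOpposite.op b')) • x = f b * x * f b')
    {x : A} (hx : x ∈ Nf k B A f) : ∃ b, x = f b := by
  induction hx using Submodule.span_induction with
  | mem y hy => obtain ⟨b, rfl⟩ := hy; exact ⟨b, rfl⟩
  | zero => exact ⟨0, (map_zero f).symm⟩
  | add a b _ _ iha ihb =>
    obtain ⟨b1, rfl⟩ := iha; obtain ⟨b2, rfl⟩ := ihb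
    exact ⟨b1 + b2, (map_add f _ _).symm⟩
  | smul r x hx ihx =>
    obtain ⟨b, rfl⟩ := ihx
    clear hx
    induction r using TensorProduct.induction_on with
    | zero => exact ⟨0, by rw [map_zero]; exact zero_smul (B ⊗[k] Bᵐᵒᵖ) (f b)⟩
    | tmul b₁ b₂ =>
      refine ⟨b₁ * b * (MulOpposite.unop b₂), ?_⟩
      rw [← MulOpposite.op_unop b₂, hbim, map_mul, map_mul, MulOpposite.unop_op]
    | add r₁ r₂ ih₁ ih₂ =>
      obtain ⟨c₁, hc₁⟩ := ih₁; obtain ⟨c₂, hc₂⟩ := ih₂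
      exact ⟨c₁ + c₂, by rw [add_smul, hc₁, hc₂, map_add]⟩

lemma op_smul_comm_Abar
    (hbim : ∀ (b b' : B) (x : A), (b ⊗ₜ[k] (MulOpposite.op b')) • x = f b * x * f b')
    (b b' : B) (m : Abar k B A f) :
    b' • ((MulOpposite.op b) • m) = (MulOpposite.op b) • (b' • m) := by
  obtain ⟨a, rfl⟩ := mkM_surj k B A f m
  rw [op_smul_mkM k B A f hbim, smul_mkM k B A f hbim, smul_mkM k B A f hbim,
    op_smul_mkM k B A f hbim, mul_assoc]

noncomputable def YRel (i : ℕ) : Submodule B (Abar k B A f ⊗[ℤ] Yp k B A f X i) :=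
  Submodule.span B {z : (Abar k B A f) ⊗[ℤ] Yp k B A f X i |
    ∃ (b : B) (m : Abar k B A f) (y : Yp k B A f X i),
      z = ((MulOpposite.op b) • m) ⊗ₜ[ℤ] y - m ⊗ₜ[ℤ] (b • y)}

noncomputable def toYp (i : ℕ) :
    (Abar k B A f ⊗[ℤ] Yp k B A f X i) →ₗ[ℤ] Yp k B A f X (i+1) :=
  ((YRel k B A f X i).mkQ.toAddMonoidHom.toIntLinearMap :
    (Abar k B A f ⊗[ℤ] Yp k B A f X i) →ₗ[ℤ]
      ((Abar k B A f ⊗[ℤ] Yp k B A f X i) ⧸ YRel k B A f X i))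

lemma toYp_rel (i : ℕ) (b : B) (m : Abar k B A f) (y : Yp k B A f X i) :
    toYp k B A f X i (((MulOpposite.op b) • m) ⊗ₜ[ℤ] y) =
      toYp k B A f X i (m ⊗ₜ[ℤ] (b • y)) :=
  (Submodule.Quotient.eq (YRel k B A f X i)).mpr (Submodule.subset_span ⟨b, m, y, rfl⟩)

lemma smul_toYp (i : ℕ) (b : B) (t : Abar k B A f ⊗[ℤ] Yp k B A f X i) :
    b • toYp k B A f X i t = toYp k B A f X i (b • t) :=
  ((YRel k B A f X i).mkQ.map_smul b t).symm

noncomputable def TiRel (i : ℕ) : Submodule A (A ⊗[ℤ] Yp k B A f X i) :=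
  Submodule.span A {z : A ⊗[ℤ] Yp k B A f X i | ∃ (a : A) (b : B) (y : Yp k B A f X i),
      z = (a * f b) ⊗ₜ[ℤ] y - a ⊗ₜ[ℤ] (b • y)}

noncomputable def toTi (i : ℕ) : (A ⊗[ℤ] Yp k B A f X i) →ₗ[A] Ti k B A f X i :=
  (TiRel k B A f X i).mkQ

noncomputable def toTiZ (i : ℕ) : (A ⊗[ℤ] Yp k B A f X i) →ₗ[ℤ] Ti k B A f X i :=
  (toTi k B A f X i).toAddMonoidHom.toIntLinearMap

lemma toTiZ_apply (i : ℕ) (t : A ⊗[ℤ] Yp k B A f X i) :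
    toTiZ k B A f X i t = toTi k B A f X i t := rfl

lemma toTi_rel (i : ℕ) (a : A) (b : B) (y : Yp k B A f X i) :
    toTi k B A f X i ((a * f b) ⊗ₜ[ℤ] y) = toTi k B A f X i (a ⊗ₜ[ℤ] (b • y)) :=
  (Submodule.Quotient.eq (TiRel k B A f X i)).mpr (Submodule.subset_span ⟨a, b, y, rfl⟩)

lemma Yp_ind (i : ℕ) {p : Yp k B A f X (i+1) → Prop} (h0 : p 0)
    (hadd : ∀ y z, p y → p z → p (y + z))
    (hgen : ∀ (a : A) (y : Yp k B A f X i), p (toYp k B A f X i (mkM k B A f a ⊗ₜ[ℤ] y))) :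
    ∀ z, p z := by
  intro z
  obtain ⟨t, rfl⟩ := Submodule.Quotient.mk_surjective (YRel k B A f X i) z
  induction t using TensorProduct.induction_on with
  | zero => show p (toYp k B A f X i 0); rw [map_zero]; exact h0
  | tmul m y =>
    obtain ⟨a, rfl⟩ := mkM_surj k B A f m
    exact hgen a y
  | add u v ihu ihv =>
    show p (toYp k B A f X i (u + v))
    rw [map_add]
    exact hadd _ _ ihu ihv

lemma Ti_ind (i : ℕ) {p : Ti k B A f X i → Prop} (h0 : p 0)
    (hadd : ∀ y z, p y → p z → p (y + z))
    (hgen : ∀ (a : A) (y : Yp k B A f X i), p (toTi k B A f X i (a ⊗ₜ[ℤ] y))) :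
    ∀ t, p t := by
  intro t
  obtain ⟨t, rfl⟩ := Submodule.Quotient.mk_surjective (TiRel k B A f X i) t
  induction t using TensorProduct.induction_on with
  | zero => show p (toTi k B A f X i 0); rw [map_zero]; exact h0
  | tmul a y => exact hgen a y
  | add u v ihu ihv =>
    show p (toTi k B A f X i (u + v))
    rw [map_add]
    exact hadd _ _ ihu ihv

lemma liftQInt_mkM {N' : Type*} [AddCommGroup N'] (ℓ : A →ₗ[ℤ] N')
    (h : ∀ x ∈ Nf k B A f, ℓ x = 0) (a : A) :
    (liftQInt (Nf k B A f) ℓ h : Abar k B A f →ₗ[ℤ] N') (mkM k B A f a) = ℓ a :=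
  liftQInt_mk _ _ _ _

lemma liftQInt_toYp (i : ℕ) {N' : Type*} [AddCommGroup N']
    (ℓ : (Abar k B A f ⊗[ℤ] Yp k B A f X i) →ₗ[ℤ] N')
    (h : ∀ x ∈ YRel k B A f X i, ℓ x = 0) (t : Abar k B A f ⊗[ℤ] Yp k B A f X i) :
    (liftQInt (YRel k B A f X i) ℓ h : Yp k B A f X (i+1) →ₗ[ℤ] N') (toYp k B A f X i t) = ℓ t :=
  liftQInt_mk _ _ _ _

lemma liftQInt_toTi (i : ℕ) {N' : Type*} [AddCommGroup N']
    (ℓ : (A ⊗[ℤ] Yp k B A f X i) →ₗ[ℤ] N')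
    (h : ∀ x ∈ TiRel k B A f X i, ℓ x = 0) (t : A ⊗[ℤ] Yp k B A f X i) :
    (liftQInt (TiRel k B A f X i) ℓ h : Ti k B A f X i →ₗ[ℤ] N') (toTi k B A f X i t) = ℓ t :=
  liftQInt_mk _ _ _ _

lemma liftQA_toTi (i : ℕ) {N' : Type v} [AddCommGroup N'] [Module A N']
    (ℓ : (A ⊗[ℤ] Yp k B A f X i) →ₗ[A] N')
    (h : TiRel k B A f X i ≤ LinearMap.ker ℓ) (t : A ⊗[ℤ] Yp k B A f X i) :
    (Submodule.liftQ (TiRel k B A f X i) ℓ h : Ti k B A f X i →ₗ[A] N') (toTi k B A f X i t) = ℓ t :=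
  Submodule.liftQ_apply _ _ _

/-! ### The reassociated `A`-action `D` on `Yp i` -/

def DProp (i : ℕ) (D : A → (Yp k B A f X i →ₗ[ℤ] Yp k B A f X i)) : Prop :=
  (∀ a a', D (a + a') = D a + D a') ∧
  (∀ (b : B) y, D (f b) y = b • y) ∧
  (∀ a (b : B) y, D (a * f b) y = D a (b • y)) ∧
  (∀ a (b : B) y, D (f b * a) y = b • D a y) ∧
  (∀ a a' y, D (a * a') y = D a (D a' y))

noncomputable def Dbeta (i : ℕ) (D : A → (Yp k B A f X i →ₗ[ℤ] Yp k B A f X i))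
    (hD : ∀ a a', D (a + a') = D a + D a') (a : A) :
    A →ₗ[ℤ] (Yp k B A f X i →ₗ[ℤ] Yp k B A f X (i+1)) :=
  (AddMonoidHom.mk' (fun a₂ =>
      (toYp k B A f X i ∘ₗ TensorProduct.mk ℤ (Abar k B A f) (Yp k B A f X i)
          (mkM k B A f (a * a₂))) -
      (toYp k B A f X i ∘ₗ TensorProduct.mk ℤ (Abar k B A f) (Yp k B A f X i)
          (mkM k B A f a) ∘ₗ D a₂))
    (by
      intro a₂ a₂'
      ext y
      simp only [LinearMap.sub_apply, LinearMap.comp_apply, TensorProduct.mk_apply,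
        LinearMap.add_apply]
      show toYp k B A f X i (mkM k B A f (a * (a₂ + a₂')) ⊗ₜ[ℤ] y) -
          toYp k B A f X i (mkM k B A f a ⊗ₜ[ℤ] (D (a₂ + a₂') y)) =
        (toYp k B A f X i (mkM k B A f (a * a₂) ⊗ₜ[ℤ] y) -
          toYp k B A f X i (mkM k B A f a ⊗ₜ[ℤ] (D a₂ y))) +
        (toYp k B A f X i (mkM k B A f (a * a₂') ⊗ₜ[ℤ] y) -
          toYp k B A f X i (mkM k B A f a ⊗ₜ[ℤ] (D a₂' y)))
      rw [mul_add, mkM_add, TensorProduct.add_tmul, map_add, hD, LinearMap.add_apply,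
        TensorProduct.tmul_add, map_add]
      abel)).toIntLinearMap

lemma Dbeta_apply (i : ℕ) (D : A → (Yp k B A f X i →ₗ[ℤ] Yp k B A f X i))
    (hD : ∀ a a', D (a + a') = D a + D a') (a a₂ : A) (y : Yp k B A f X i) :
    Dbeta k B A f X i D hD a a₂ y =
      toYp k B A f X i (mkM k B A f (a * a₂) ⊗ₜ[ℤ] y) -
        toYp k B A f X i (mkM k B A f a ⊗ₜ[ℤ] (D a₂ y)) := rfl

noncomputable def Dstep
    (hbim : ∀ (b b' : B) (x : A), (b ⊗ₜ[k] (MulOpposite.op b')) • x = f b * x * f b')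
    (i : ℕ) (P : {D : A → (Yp k B A f X i →ₗ[ℤ] Yp k B A f X i) // DProp k B A f X i D}) :
    A → (Yp k B A f X (i+1) →ₗ[ℤ] Yp k B A f X (i+1)) := fun a =>
  liftQInt (YRel k B A f X i)
    (TensorProduct.lift (liftQInt (Nf k B A f) (Dbeta k B A f X i P.1 P.2.1 a)
      (by
        intro x hx
        obtain ⟨b, rfl⟩ := mem_Nf k B A f hbim hx
        ext y
        rw [Dbeta_apply, LinearMap.zero_apply, P.2.2.1 b y,
          ← op_smul_mkM k B A f hbim b (a := a), toYp_rel, sub_self])))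
    (by
      apply vanish_on_spanR (R := B)
      · rintro b' s ⟨b, m, y, rfl⟩
        refine ⟨b, b' • m, y, ?_⟩
        rw [smul_sub, TensorProduct.smul_tmul', TensorProduct.smul_tmul',
          op_smul_comm_Abar k B A f hbim]
      · rintro s ⟨b, m, y, rfl⟩
        obtain ⟨a₂, rfl⟩ := mkM_surj k B A f m
        erw [map_sub, TensorProduct.lift.tmul, TensorProduct.lift.tmul,
          op_smul_mkM k B A f hbim]
        show (toYp k B A f X i (mkM k B A f (a * (a₂ * f b)) ⊗ₜ[ℤ] y) -
            toYp k B A f X i (mkM k B A f a ⊗ₜ[ℤ] (P.1 (a₂ * f b) y))) -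
            (toYp k B A f X i (mkM k B A f (a * a₂) ⊗ₜ[ℤ] (b • y)) -
            toYp k B A f X i (mkM k B A f a ⊗ₜ[ℤ] (P.1 a₂ (b • y)))) = 0
        rw [P.2.2.2.1 a₂ b y, ← mul_assoc, ← op_smul_mkM k B A f hbim b (a := a * a₂),
          toYp_rel]
        abel)

lemma Dstep_gen
    (hbim : ∀ (b b' : B) (x : A), (b ⊗ₜ[k] (MulOpposite.op b')) • x = f b * x * f b')
    (i : ℕ) (P : {D : A → (Yp k B A f X i →ₗ[ℤ] Yp k B A f X i) // DProp k B A f X i D})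
    (a a₂ : A) (y : Yp k B A f X i) :
    Dstep k B A f X hbim i P a (toYp k B A f X i (mkM k B A f a₂ ⊗ₜ[ℤ] y)) =
      toYp k B A f X i (mkM k B A f (a * a₂) ⊗ₜ[ℤ] y) -
        toYp k B A f X i (mkM k B A f a ⊗ₜ[ℤ] (P.1 a₂ y)) := rfl

noncomputable def Dstr
    (hbim : ∀ (b b' : B) (x : A), (b ⊗ₜ[k] (MulOpposite.op b')) • x = f b * x * f b')
    (hBX : ∀ (b : B) (x : X), b • x = f b • x) :
    (i : ℕ) → {D : A → (Yp k B A f X i →ₗ[ℤ] Yp k B A f X i) // DProp k B A f X i D}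
  | 0 =>
    ⟨fun a => (DistribSMul.toAddMonoidHom X a).toIntLinearMap, by
      refine ⟨?_, ?_, ?_, ?_, ?_⟩
      · intro a a'; ext x
        have h : ∀ t : X, (a + a') • t = a • t + a' • t := fun t => add_smul a a' t
        exact h x
      · intro b y; exact (hBX b y).symm
      · intro a b y
        have h : ∀ x : X, (a * f b) • x = a • (b • x) := fun x => by rw [hBX b x, mul_smul]
        exact h y
      · intro a b y
        have h : ∀ x : X, (f b * a) • x = b • (a • x) := fun x => by rw [hBX, mul_smul]
        exact h y
      · intro a a' y
        have h : ∀ x : X, (a * a') • x = a • (a' • x) := fun x => mul_smul a a' x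
        exact h y⟩
  | (i+1) =>
    ⟨Dstep k B A f X hbim i (Dstr hbim hBX i), by
      set P := Dstr hbim hBX i with hP
      refine ⟨?_, ?_, ?_, ?_, ?_⟩
      · -- additivity
        intro a a'
        ext z
        induction z using Yp_ind with
        | h0 => rw [map_zero, LinearMap.add_apply, map_zero, map_zero, add_zero]
        | hadd y z hy hz =>
          rw [map_add, hy, hz]
          simp only [LinearMap.add_apply]
          rw [map_add, map_add]
          abel
        | hgen a₂ y =>
          rw [Dstep_gen, LinearMap.add_apply, Dstep_gen, Dstep_gen, add_mul, mkM_add,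
            TensorProduct.add_tmul, map_add, mkM_add, TensorProduct.add_tmul, map_add]
          abel
      · -- D (f b) = b • ·
        intro b z
        induction z using Yp_ind with
        | h0 => rw [map_zero, smul_zero]
        | hadd y z hy hz => rw [map_add, hy, hz, smul_add]
        | hgen a₂ y =>
          rw [Dstep_gen, mkM_fb, TensorProduct.zero_tmul, map_zero, sub_zero,
            smul_toYp, TensorProduct.smul_tmul', smul_mkM k B A f hbim]
      · -- D (a * f b) y = D a (b • y)
        intro a b z
        induction z using Yp_ind with
        | h0 => rw [map_zero, smul_zero, map_zero]
        | hadd y z hy hz => rw [map_add, smul_add, map_add, hy, hz]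
        | hgen a₂ y =>
          rw [Dstep_gen, smul_toYp, TensorProduct.smul_tmul', smul_mkM k B A f hbim,
            Dstep_gen, mul_assoc, P.2.2.2.2.1 a₂ b y, ← op_smul_mkM k B A f hbim b (a := a),
            toYp_rel]
      · -- D (f b * a) y = b • D a y
        intro a b z
        induction z using Yp_ind with
        | h0 => rw [map_zero, map_zero, smul_zero]
        | hadd y z hy hz => rw [map_add, map_add, hy, hz, smul_add]
        | hgen a₂ y =>
          rw [Dstep_gen, Dstep_gen, smul_sub, smul_toYp, smul_toYp,
            TensorProduct.smul_tmul', TensorProduct.smul_tmul',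
            smul_mkM k B A f hbim, smul_mkM k B A f hbim, mul_assoc]
      · -- D (a * a') y = D a (D a' y)
        intro a a' z
        induction z using Yp_ind with
        | h0 => rw [map_zero, map_zero, map_zero]
        | hadd y z hy hz => rw [map_add, map_add, map_add, hy, hz]
        | hgen a₂ y =>
          rw [Dstep_gen, Dstep_gen, map_sub, Dstep_gen, Dstep_gen, mul_assoc,
            P.2.2.2.2.2 a' a₂ y]
          abel⟩

noncomputable def Dm
    (hbim : ∀ (b b' : B) (x : A), (b ⊗ₜ[k] (MulOpposite.op b')) • x = f b * x * f b')
    (hBX : ∀ (b : B) (x : X), b • x = f b • x) (i : ℕ) (a : A) :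
    Yp k B A f X i →ₗ[ℤ] Yp k B A f X i := (Dstr k B A f X hbim hBX i).1 a

lemma Dm_zero_apply
    (hbim : ∀ (b b' : B) (x : A), (b ⊗ₜ[k] (MulOpposite.op b')) • x = f b * x * f b')
    (hBX : ∀ (b : B) (x : X), b • x = f b • x) (a : A) (x : X) :
    Dm k B A f X hbim hBX 0 a x = a • x := rfl

lemma Dm_succ_gen
    (hbim : ∀ (b b' : B) (x : A), (b ⊗ₜ[k] (MulOpposite.op b')) • x = f b * x * f b')
    (hBX : ∀ (b : B) (x : X), b • x = f b • x) (i : ℕ) (a a₂ : A) (y : Yp k B A f X i) :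
    Dm k B A f X hbim hBX (i+1) a (toYp k B A f X i (mkM k B A f a₂ ⊗ₜ[ℤ] y)) =
      toYp k B A f X i (mkM k B A f (a * a₂) ⊗ₜ[ℤ] y) -
        toYp k B A f X i (mkM k B A f a ⊗ₜ[ℤ] (Dm k B A f X hbim hBX i a₂ y)) :=
  Dstep_gen k B A f X hbim i (Dstr k B A f X hbim hBX i) a a₂ y

lemma Dm_prop
    (hbim : ∀ (b b' : B) (x : A), (b ⊗ₜ[k] (MulOpposite.op b')) • x = f b * x * f b')
    (hBX : ∀ (b : B) (x : X), b • x = f b • x) (i : ℕ) :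
    DProp k B A f X i (Dm k B A f X hbim hBX i) := (Dstr k B A f X hbim hBX i).2

/-! ### The bar differential `dmap` and augmentation `g0map` -/

noncomputable def Lbeta
    (hbim : ∀ (b b' : B) (x : A), (b ⊗ₜ[k] (MulOpposite.op b')) • x = f b * x * f b')
    (hBX : ∀ (b : B) (x : X), b • x = f b • x) (i : ℕ) (a : A) :
    A →ₗ[ℤ] (Yp k B A f X i →ₗ[ℤ] Ti k B A f X i) :=
  (AddMonoidHom.mk' (fun a₂ =>
      (toTiZ k B A f X i ∘ₗ TensorProduct.mk ℤ A (Yp k B A f X i) (a * a₂)) -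
      (toTiZ k B A f X i ∘ₗ TensorProduct.mk ℤ A (Yp k B A f X i) a ∘ₗ
        Dm k B A f X hbim hBX i a₂))
    (by
      intro a₂ a₂'
      ext y
      simp only [LinearMap.sub_apply, LinearMap.comp_apply, TensorProduct.mk_apply,
        LinearMap.add_apply]
      show toTiZ k B A f X i ((a * (a₂ + a₂')) ⊗ₜ[ℤ] y) -
          toTiZ k B A f X i (a ⊗ₜ[ℤ] (Dm k B A f X hbim hBX i (a₂ + a₂') y)) =
        (toTiZ k B A f X i ((a * a₂) ⊗ₜ[ℤ] y) -
          toTiZ k B A f X i (a ⊗ₜ[ℤ] (Dm k B A f X hbim hBX i a₂ y))) +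
        (toTiZ k B A f X i ((a * a₂') ⊗ₜ[ℤ] y) -
          toTiZ k B A f X i (a ⊗ₜ[ℤ] (Dm k B A f X hbim hBX i a₂' y)))
      rw [mul_add, TensorProduct.add_tmul, map_add, (Dm_prop k B A f X hbim hBX i).1,
        LinearMap.add_apply, TensorProduct.tmul_add, map_add]
      abel)).toIntLinearMap

lemma Lbeta_apply
    (hbim : ∀ (b b' : B) (x : A), (b ⊗ₜ[k] (MulOpposite.op b')) • x = f b * x * f b')
    (hBX : ∀ (b : B) (x : X), b • x = f b • x) (i : ℕ) (a a₂ : A) (y : Yp k B A f X i) :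
    Lbeta k B A f X hbim hBX i a a₂ y =
      toTi k B A f X i ((a * a₂) ⊗ₜ[ℤ] y) -
        toTi k B A f X i (a ⊗ₜ[ℤ] (Dm k B A f X hbim hBX i a₂ y)) := rfl

noncomputable def lamd
    (hbim : ∀ (b b' : B) (x : A), (b ⊗ₜ[k] (MulOpposite.op b')) • x = f b * x * f b')
    (hBX : ∀ (b : B) (x : X), b • x = f b • x) (i : ℕ) (a : A) :
    Yp k B A f X (i+1) →ₗ[ℤ] Ti k B A f X i :=
  liftQInt (YRel k B A f X i)
    (TensorProduct.lift (liftQInt (Nf k B A f) (Lbeta k B A f X hbim hBX i a)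
      (by
        intro x hx
        obtain ⟨b, rfl⟩ := mem_Nf k B A f hbim hx
        ext y
        rw [Lbeta_apply, LinearMap.zero_apply, (Dm_prop k B A f X hbim hBX i).2.1 b y,
          toTi_rel, sub_self])))
    (by
      apply vanish_on_spanR (R := B)
      · rintro b' s ⟨b, m, y, rfl⟩
        refine ⟨b, b' • m, y, ?_⟩
        rw [smul_sub, TensorProduct.smul_tmul', TensorProduct.smul_tmul',
          op_smul_comm_Abar k B A f hbim]
      · rintro s ⟨b, m, y, rfl⟩
        obtain ⟨a₂, rfl⟩ := mkM_surj k B A f m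
        erw [map_sub, TensorProduct.lift.tmul, TensorProduct.lift.tmul,
          op_smul_mkM k B A f hbim]
        show (toTi k B A f X i ((a * (a₂ * f b)) ⊗ₜ[ℤ] y) -
            toTi k B A f X i (a ⊗ₜ[ℤ] (Dm k B A f X hbim hBX i (a₂ * f b) y))) -
            (toTi k B A f X i ((a * a₂) ⊗ₜ[ℤ] (b • y)) -
            toTi k B A f X i (a ⊗ₜ[ℤ] (Dm k B A f X hbim hBX i a₂ (b • y)))) = 0
        rw [(Dm_prop k B A f X hbim hBX i).2.2.1 a₂ b y, ← mul_assoc, toTi_rel]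
        abel)

lemma lamd_gen
    (hbim : ∀ (b b' : B) (x : A), (b ⊗ₜ[k] (MulOpposite.op b')) • x = f b * x * f b')
    (hBX : ∀ (b : B) (x : X), b • x = f b • x) (i : ℕ) (a a₂ : A) (y : Yp k B A f X i) :
    lamd k B A f X hbim hBX i a (toYp k B A f X i (mkM k B A f a₂ ⊗ₜ[ℤ] y)) =
      toTi k B A f X i ((a * a₂) ⊗ₜ[ℤ] y) -
        toTi k B A f X i (a ⊗ₜ[ℤ] (Dm k B A f X hbim hBX i a₂ y)) := rfl

lemma lamd_add
    (hbim : ∀ (b b' : B) (x : A), (b ⊗ₜ[k] (MulOpposite.op b')) • x = f b * x * f b')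
    (hBX : ∀ (b : B) (x : X), b • x = f b • x) (i : ℕ) (a a' : A) :
    lamd k B A f X hbim hBX i (a + a') =
      lamd k B A f X hbim hBX i a + lamd k B A f X hbim hBX i a' := by
  ext z
  induction z using Yp_ind with
  | h0 => rw [map_zero, LinearMap.add_apply, map_zero, map_zero, add_zero]
  | hadd y z hy hz =>
    rw [map_add, hy, hz]
    simp only [LinearMap.add_apply]
    rw [map_add, map_add]
    abel
  | hgen a₂ y =>
    rw [lamd_gen, LinearMap.add_apply, lamd_gen, lamd_gen, add_mul,
      TensorProduct.add_tmul, map_add, TensorProduct.add_tmul, map_add]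
    abel

lemma lamd_smul
    (hbim : ∀ (b b' : B) (x : A), (b ⊗ₜ[k] (MulOpposite.op b')) • x = f b * x * f b')
    (hBX : ∀ (b : B) (x : X), b • x = f b • x) (i : ℕ) (a' a : A) (z : Yp k B A f X (i+1)) :
    lamd k B A f X hbim hBX i (a' * a) z = a' • lamd k B A f X hbim hBX i a z := by
  induction z using Yp_ind with
  | h0 => rw [map_zero, map_zero, smul_zero]
  | hadd y z hy hz => rw [map_add, map_add, hy, hz, smul_add]
  | hgen a₂ y =>
    rw [lamd_gen, lamd_gen, smul_sub, ← map_smul, ← map_smul,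
      TensorProduct.smul_tmul', TensorProduct.smul_tmul', smul_eq_mul, smul_eq_mul,
      mul_assoc]

lemma lamd_bal
    (hbim : ∀ (b b' : B) (x : A), (b ⊗ₜ[k] (MulOpposite.op b')) • x = f b * x * f b')
    (hBX : ∀ (b : B) (x : X), b • x = f b • x) (i : ℕ) (a : A) (b : B)
    (z : Yp k B A f X (i+1)) :
    lamd k B A f X hbim hBX i (a * f b) z = lamd k B A f X hbim hBX i a (b • z) := by
  induction z using Yp_ind with
  | h0 => rw [map_zero, smul_zero, map_zero]
  | hadd y z hy hz => rw [map_add, smul_add, map_add, hy, hz]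
  | hgen a₂ y =>
    rw [lamd_gen, smul_toYp, TensorProduct.smul_tmul', smul_mkM k B A f hbim, lamd_gen,
      mul_assoc, (Dm_prop k B A f X hbim hBX i).2.2.2.1 a₂ b y, toTi_rel]

noncomputable def dmap
    (hbim : ∀ (b b' : B) (x : A), (b ⊗ₜ[k] (MulOpposite.op b')) • x = f b * x * f b')
    (hBX : ∀ (b : B) (x : X), b • x = f b • x) (i : ℕ) :
    Ti k B A f X (i+1) →ₗ[A] Ti k B A f X i :=
  Submodule.liftQ (TiRel k B A f X (i+1))
    { toFun := TensorProduct.lift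
        ((AddMonoidHom.mk' (fun a => lamd k B A f X hbim hBX i a)
          (lamd_add k B A f X hbim hBX i)).toIntLinearMap)
      map_add' := by intro t t'; rw [map_add]
      map_smul' := by
        intro a' t
        simp only [RingHom.id_apply]
        induction t using TensorProduct.induction_on with
        | zero => rw [smul_zero, map_zero, smul_zero]
        | tmul a z =>
          rw [TensorProduct.smul_tmul', TensorProduct.lift.tmul, TensorProduct.lift.tmul,
            smul_eq_mul]
          exact lamd_smul k B A f X hbim hBX i a' a z
        | add u v ihu ihv =>
          rw [smul_add, map_add, map_add, ihu, ihv, smul_add] }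
    (by
      rw [TiRel, Submodule.span_le]
      rintro s ⟨a, b, z, rfl⟩
      simp only [SetLike.mem_coe, LinearMap.mem_ker, LinearMap.coe_mk, AddHom.coe_mk,
        map_sub, TensorProduct.lift.tmul]
      show lamd k B A f X hbim hBX i (a * f b) z - lamd k B A f X hbim hBX i a (b • z) = 0
      rw [lamd_bal k B A f X hbim hBX i a b z, sub_self])

lemma dmap_gen
    (hbim : ∀ (b b' : B) (x : A), (b ⊗ₜ[k] (MulOpposite.op b')) • x = f b * x * f b')
    (hBX : ∀ (b : B) (x : X), b • x = f b • x) (i : ℕ) (a : A) (z : Yp k B A f X (i+1)) :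
    dmap k B A f X hbim hBX i (toTi k B A f X (i+1) (a ⊗ₜ[ℤ] z)) =
      lamd k B A f X hbim hBX i a z := rfl

/-! ### The contracting homotopy -/

noncomputable def smap
    (hbim : ∀ (b b' : B) (x : A), (b ⊗ₜ[k] (MulOpposite.op b')) • x = f b * x * f b')
    (i : ℕ) : Ti k B A f X i →ₗ[ℤ] Ti k B A f X (i+1) :=
  liftQInt (TiRel k B A f X i)
    (TensorProduct.lift
      ((AddMonoidHom.mk' (fun a =>
          toTiZ k B A f X (i+1) ∘ₗ TensorProduct.mk ℤ A (Yp k B A f X (i+1)) 1 ∘ₗ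
            toYp k B A f X i ∘ₗ TensorProduct.mk ℤ (Abar k B A f) (Yp k B A f X i)
              (mkM k B A f a))
        (by
          intro a a'
          ext y
          simp only [LinearMap.add_apply, LinearMap.comp_apply, TensorProduct.mk_apply]
          show toTiZ k B A f X (i+1) (1 ⊗ₜ[ℤ] toYp k B A f X i (mkM k B A f (a + a') ⊗ₜ[ℤ] y)) =
            toTiZ k B A f X (i+1) (1 ⊗ₜ[ℤ] toYp k B A f X i (mkM k B A f a ⊗ₜ[ℤ] y)) +
              toTiZ k B A f X (i+1) (1 ⊗ₜ[ℤ] toYp k B A f X i (mkM k B A f a' ⊗ₜ[ℤ] y))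
          rw [mkM_add, TensorProduct.add_tmul, map_add, TensorProduct.tmul_add, map_add])
        ).toIntLinearMap))
    (by
      apply vanish_on_spanR (R := A)
      · rintro a' s ⟨a, b, y, rfl⟩
        refine ⟨a' * a, b, y, ?_⟩
        rw [smul_sub, TensorProduct.smul_tmul', TensorProduct.smul_tmul', smul_eq_mul,
          smul_eq_mul, mul_assoc]
      · rintro s ⟨a, b, y, rfl⟩
        erw [map_sub, TensorProduct.lift.tmul, TensorProduct.lift.tmul]
        show toTi k B A f X (i+1)
            (1 ⊗ₜ[ℤ] toYp k B A f X i (mkM k B A f (a * f b) ⊗ₜ[ℤ] y)) -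
          toTi k B A f X (i+1)
            (1 ⊗ₜ[ℤ] toYp k B A f X i (mkM k B A f a ⊗ₜ[ℤ] (b • y))) = 0
        rw [← toYp_rel k B A f X i b (mkM k B A f a) y, op_smul_mkM k B A f hbim, sub_self])

lemma smap_gen
    (hbim : ∀ (b b' : B) (x : A), (b ⊗ₜ[k] (MulOpposite.op b')) • x = f b * x * f b')
    (i : ℕ) (a : A) (y : Yp k B A f X i) :
    smap k B A f X hbim i (toTi k B A f X i (a ⊗ₜ[ℤ] y)) =
      toTi k B A f X (i+1) (1 ⊗ₜ[ℤ] toYp k B A f X i (mkM k B A f a ⊗ₜ[ℤ] y)) := rfl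

noncomputable def sigma0 : X →ₗ[ℤ] Ti k B A f X 0 :=
  toTiZ k B A f X 0 ∘ₗ TensorProduct.mk ℤ A (Yp k B A f X 0) 1

lemma sigma0_apply (x : X) : sigma0 k B A f X x = toTi k B A f X 0 (1 ⊗ₜ[ℤ] x) := rfl

noncomputable def g0map (hBX : ∀ (b : B) (x : X), b • x = f b • x) :
    Ti k B A f X 0 →ₗ[A] X :=
  Submodule.liftQ (TiRel k B A f X 0)
    { toFun := TensorProduct.lift
        ((AddMonoidHom.mk' (fun a => (DistribSMul.toAddMonoidHom X a).toIntLinearMap)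
          (by intro a a'; ext x; exact add_smul a a' x)).toIntLinearMap)
      map_add' := by intro t t'; erw [map_add]
      map_smul' := by
        intro a' t
        simp only [RingHom.id_apply]
        induction t using TensorProduct.induction_on with
        | zero => rw [smul_zero]; erw [map_zero, smul_zero]
        | tmul a x =>
          erw [TensorProduct.smul_tmul', TensorProduct.lift.tmul, TensorProduct.lift.tmul,
            smul_eq_mul]
          have h : ∀ x : X, (a' * a) • x = a' • (a • x) := fun x => mul_smul a' a x
          exact h x
        | add u v ihu ihv =>
          erw [smul_add, map_add, map_add, ihu, ihv, smul_add] }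
    (by
      rw [TiRel, Submodule.span_le]
      rintro s ⟨a, b, y, rfl⟩
      simp only [SetLike.mem_coe, LinearMap.mem_ker, LinearMap.coe_mk, AddHom.coe_mk,
        map_sub, TensorProduct.lift.tmul]
      have h : ∀ x : X, (a * f b) • x - a • (b • x) = 0 := fun x => by
        rw [mul_smul, ← hBX, sub_self]
      exact h y)

lemma g0_gen (hBX : ∀ (b : B) (x : X), b • x = f b • x) (a : A) (x : X) :
    g0map k B A f X hBX (toTi k B A f X 0 (a ⊗ₜ[ℤ] x)) = a • x := rfl

/-! ### Homotopy identities -/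

lemma homot0
    (hbim : ∀ (b b' : B) (x : A), (b ⊗ₜ[k] (MulOpposite.op b')) • x = f b * x * f b')
    (hBX : ∀ (b : B) (x : X), b • x = f b • x) (t : Ti k B A f X 0) :
      sigma0 k B A f X (g0map k B A f X hBX t) +
        dmap k B A f X hbim hBX 0 (smap k B A f X hbim 0 t) = t := by
  induction t using Ti_ind with
  | h0 => rw [map_zero, map_zero, map_zero, map_zero, add_zero]
  | hadd y z hy hz =>
    rw [map_add, map_add, map_add, map_add]
    conv_rhs => rw [← hy, ← hz]
    abel
  | hgen a x =>
    have h : sigma0 k B A f X (g0map k B A f X hBX (toTi k B A f X 0 (a ⊗ₜ[ℤ] x))) =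
        toTi k B A f X 0 (1 ⊗ₜ[ℤ] Dm k B A f X hbim hBX 0 a x) := rfl
    rw [h, smap_gen, dmap_gen, lamd_gen, one_mul]
    abel

lemma homotS
    (hbim : ∀ (b b' : B) (x : A), (b ⊗ₜ[k] (MulOpposite.op b')) • x = f b * x * f b')
    (hBX : ∀ (b : B) (x : X), b • x = f b • x) (i : ℕ) (t : Ti k B A f X (i+1)) :
      smap k B A f X hbim i (dmap k B A f X hbim hBX i t) +
        dmap k B A f X hbim hBX (i+1) (smap k B A f X hbim (i+1) t) = t := by
  induction t using Ti_ind with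
  | h0 => rw [map_zero, map_zero, map_zero, map_zero, add_zero]
  | hadd y z hy hz =>
    rw [map_add, map_add, map_add, map_add]
    conv_rhs => rw [← hy, ← hz]
    abel
  | hgen a z =>
    induction z using Yp_ind with
    | h0 =>
      rw [TensorProduct.tmul_zero, map_zero, map_zero, map_zero, map_zero, map_zero,
        add_zero]
    | hadd y z hy hz =>
      rw [TensorProduct.tmul_add, map_add, map_add, map_add, map_add, map_add]
      conv_rhs => rw [← hy, ← hz]
      abel
    | hgen a₁ y =>
      rw [dmap_gen, lamd_gen, map_sub, smap_gen, smap_gen, smap_gen, dmap_gen, lamd_gen,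
        Dm_succ_gen, one_mul, TensorProduct.tmul_sub, map_sub]
      abel

lemma ddz
    (hbim : ∀ (b b' : B) (x : A), (b ⊗ₜ[k] (MulOpposite.op b')) • x = f b * x * f b')
    (hBX : ∀ (b : B) (x : X), b • x = f b • x) (i : ℕ) (t : Ti k B A f X (i+2)) :
      dmap k B A f X hbim hBX i (dmap k B A f X hbim hBX (i+1) t) = 0 := by
  induction t using Ti_ind with
  | h0 => rw [map_zero, map_zero]
  | hadd y z hy hz => rw [map_add, map_add, hy, hz, add_zero]
  | hgen a z =>
    induction z using Yp_ind with
    | h0 => rw [TensorProduct.tmul_zero, map_zero, map_zero, map_zero]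
    | hadd y z hy hz =>
      rw [TensorProduct.tmul_add, map_add, map_add, map_add, hy, hz, add_zero]
    | hgen a₁ w =>
      rw [dmap_gen, lamd_gen, map_sub, dmap_gen, dmap_gen]
      induction w using Yp_ind with
      | h0 => rw [map_zero, map_zero, map_zero, sub_zero]
      | hadd y z hy hz =>
        rw [map_add, map_add, map_add, ← sub_add_sub_comm, hy, hz, add_zero]
      | hgen a₂ y =>
        rw [lamd_gen, Dm_succ_gen, map_sub, lamd_gen, lamd_gen,
          (Dm_prop k B A f X hbim hBX i).2.2.2.2 a₁ a₂ y, mul_assoc a a₁ a₂]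
        abel

lemma g0d
    (hbim : ∀ (b b' : B) (x : A), (b ⊗ₜ[k] (MulOpposite.op b')) • x = f b * x * f b')
    (hBX : ∀ (b : B) (x : X), b • x = f b • x) (u : Ti k B A f X 1) :
    g0map k B A f X hBX (dmap k B A f X hbim hBX 0 u) = 0 := by
  induction u using Ti_ind with
  | h0 => rw [map_zero, map_zero]
  | hadd y z hy hz => rw [map_add, map_add, hy, hz, add_zero]
  | hgen a z =>
    induction z using Yp_ind with
    | h0 => rw [TensorProduct.tmul_zero, map_zero, map_zero, map_zero]
    | hadd y z hy hz =>
      rw [TensorProduct.tmul_add, map_add, map_add, map_add, hy, hz, add_zero]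
    | hgen a₁ x =>
      rw [dmap_gen, lamd_gen, map_sub]
      have h : ∀ z : X, (a * a₁) • z = a • (a₁ • z) := fun z => mul_smul a a₁ z
      exact sub_eq_zero.mpr (h x)

/-! ### Vanishing of `Yp n` -/

lemma Wpow_ind (j : ℕ) {p : Wpow (Abar k B A f) (j+1) → Prop} (h0 : p 0)
    (htmul : ∀ (m : Abar k B A f) (w : Wpow (Abar k B A f) j),
      p ((m ⊗ₜ[ℤ] w : Abar k B A f ⊗[ℤ] Wpow (Abar k B A f) j)))
    (hadd : ∀ u v, p u → p v → p (u + v)) :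
    ∀ w, p w := fun w => by
  have key : ∀ t : Abar k B A f ⊗[ℤ] Wpow (Abar k B A f) j, p t :=
    fun t => TensorProduct.induction_on t h0 htmul hadd
  exact key w

noncomputable def psiZero : Wpow (Abar k B A f) 0 →ₗ[ℤ] (X →ₗ[ℤ] Yp k B A f X 1) :=
  (AddMonoidHom.mk' (fun m =>
      toYp k B A f X 0 ∘ₗ TensorProduct.mk ℤ (Abar k B A f) (Yp k B A f X 0) m)
    (by
      intro m m'; ext x
      simp only [LinearMap.add_apply, LinearMap.comp_apply, TensorProduct.mk_apply]
      exact (congrArg (toYp k B A f X 0) (TensorProduct.add_tmul (M := Abar k B A f)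
        (N := Yp k B A f X 0) m m' x)).trans (map_add _ _ _))).toIntLinearMap

noncomputable def psiStep (j : ℕ)
    (Ψ : Wpow (Abar k B A f) j →ₗ[ℤ] (X →ₗ[ℤ] Yp k B A f X (j+1))) :
    (Abar k B A f ⊗[ℤ] Wpow (Abar k B A f) j) →ₗ[ℤ] (X →ₗ[ℤ] Yp k B A f X (j+2)) :=
  TensorProduct.lift
    ((AddMonoidHom.mk' (fun m =>
        (AddMonoidHom.mk' (fun w =>
            toYp k B A f X (j+1) ∘ₗ
              TensorProduct.mk ℤ (Abar k B A f) (Yp k B A f X (j+1)) m ∘ₗ Ψ w)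
          (by
            intro w w'; ext x
            simp only [LinearMap.add_apply, LinearMap.comp_apply, TensorProduct.mk_apply,
              map_add, TensorProduct.tmul_add]
            exact (congrArg (toYp k B A f X (j+1))
              (TensorProduct.tmul_add m (Ψ w x) (Ψ w' x))).trans (map_add _ _ _))).toIntLinearMap)
      (by
        intro m m'; ext w x
        show toYp k B A f X (j+1) ((m + m') ⊗ₜ[ℤ] (Ψ w x)) =
          toYp k B A f X (j+1) (m ⊗ₜ[ℤ] (Ψ w x)) +
            toYp k B A f X (j+1) (m' ⊗ₜ[ℤ] (Ψ w x))
        rw [TensorProduct.add_tmul, map_add])).toIntLinearMap)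

noncomputable def psi : (j : ℕ) → Wpow (Abar k B A f) j →ₗ[ℤ] (X →ₗ[ℤ] Yp k B A f X (j+1))
  | 0 => psiZero k B A f X
  | (j+1) => psiStep k B A f X j (psi j)

lemma psi_zero_apply (m : Abar k B A f) (x : X) :
    psi k B A f X 0 m x = toYp k B A f X 0 (m ⊗ₜ[ℤ] x) := rfl

lemma psi_succ_apply (j : ℕ) (m : Abar k B A f) (w : Wpow (Abar k B A f) j) (x : X) :
    psi k B A f X (j+1)
        ((m ⊗ₜ[ℤ] w : Abar k B A f ⊗[ℤ] Wpow (Abar k B A f) j)) x =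
      toYp k B A f X (j+1) (m ⊗ₜ[ℤ] (psi k B A f X j w x)) := rfl

lemma psi_Lact (j : ℕ) (b : B) (w : Wpow (Abar k B A f) j) (x : X) :
    psi k B A f X j (Lact B (Abar k B A f) j b w) x = b • psi k B A f X j w x := by
  induction j with
  | zero =>
    show toYp k B A f X 0 (TensorProduct.tmul ℤ (N := Yp k B A f X 0) (b • @id (Abar k B A f) w) x) =
      b • toYp k B A f X 0 (TensorProduct.tmul ℤ (N := Yp k B A f X 0) (@id (Abar k B A f) w) x)
    rw [smul_toYp]
    exact congrArg (toYp k B A f X 0)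
      (TensorProduct.smul_tmul' (R := ℤ) (N := Yp k B A f X 0) b (@id (Abar k B A f) w) x).symm
  | succ j _ =>
    induction w using Wpow_ind with
    | h0 => rw [map_zero, map_zero, LinearMap.zero_apply, smul_zero]
    | htmul m w' =>
      have hL : ∀ u : Abar k B A f ⊗[ℤ] Wpow (Abar k B A f) j,
          Lact B (Abar k B A f) (j+1) b u =
            LinearMap.rTensor (Wpow (Abar k B A f) j)
              ((DistribSMul.toAddMonoidHom (Abar k B A f) b).toIntLinearMap) u :=
        fun _ => rfl
      rw [hL ((m ⊗ₜ[ℤ] w' : Abar k B A f ⊗[ℤ] Wpow (Abar k B A f) j)),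
        LinearMap.rTensor_tmul]
      show psi k B A f X (j+1)
          (((b • m) ⊗ₜ[ℤ] w' : Abar k B A f ⊗[ℤ] Wpow (Abar k B A f) j)) x = _
      rw [psi_succ_apply, psi_succ_apply, smul_toYp, TensorProduct.smul_tmul']
    | hadd u v ihu ihv =>
      rw [map_add, map_add, LinearMap.add_apply, ihu, ihv, map_add, LinearMap.add_apply,
        smul_add]

lemma psi_rel (j : ℕ) :
    ∀ {w : Wpow (Abar k B A f) j}, w ∈ RelW B (Abar k B A f) j →
      ∀ x : X, psi k B A f X j w x = 0 := by
  induction j with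
  | zero =>
    intro w hw x
    rw [show RelW B (Abar k B A f) 0 = ⊥ from rfl] at hw
    rw [(Submodule.mem_bot ℤ).mp hw, map_zero, LinearMap.zero_apply]
  | succ j ih =>
    intro w hw x
    rw [show RelW B (Abar k B A f) (j+1) = Submodule.span ℤ
        ({z : (Abar k B A f) ⊗[ℤ] Wpow (Abar k B A f) j |
            ∃ (b : B) (m : Abar k B A f) (w : Wpow (Abar k B A f) j),
              z = (MulOpposite.op b • m) ⊗ₜ[ℤ] w -
                m ⊗ₜ[ℤ] (Lact B (Abar k B A f) j b w)} ∪
          {z : (Abar k B A f) ⊗[ℤ] Wpow (Abar k B A f) j |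
            ∃ (m : Abar k B A f) (w : Wpow (Abar k B A f) j),
              w ∈ RelW B (Abar k B A f) j ∧ z = m ⊗ₜ[ℤ] w}) from rfl] at hw
    induction hw using Submodule.span_induction with
    | mem s hs =>
      rcases hs with ⟨b, m, w', rfl⟩ | ⟨m, w', hw', rfl⟩
      · erw [map_sub]
        rw [LinearMap.sub_apply, psi_succ_apply, psi_succ_apply, psi_Lact,
          toYp_rel, sub_self]
      · rw [psi_succ_apply, ih hw' x, TensorProduct.tmul_zero, map_zero]
    | zero => rw [map_zero, LinearMap.zero_apply]
    | add u v _ _ ihu ihv => rw [map_add, LinearMap.add_apply, ihu, ihv, add_zero]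
    | smul n u _ ihu => rw [map_smul, LinearMap.smul_apply, ihu, smul_zero]

lemma Yp_gen (j : ℕ) :
    ∀ y : Yp k B A f X (j+1),
      y ∈ AddSubgroup.closure
        {z | ∃ (w : Wpow (Abar k B A f) j) (x : X), psi k B A f X j w x = z} := by
  induction j with
  | zero =>
    intro y
    induction y using Yp_ind with
    | h0 => exact zero_mem _
    | hadd y z hy hz => exact add_mem hy hz
    | hgen a y => exact AddSubgroup.subset_closure ⟨mkM k B A f a, y, rfl⟩
  | succ j ih =>
    intro y
    induction y using Yp_ind with
    | h0 => exact zero_mem _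
    | hadd y z hy hz => exact add_mem hy hz
    | hgen a y =>
      have hy := ih y
      induction hy using AddSubgroup.closure_induction with
      | mem z hz =>
        obtain ⟨w, x, rfl⟩ := hz
        exact AddSubgroup.subset_closure
          ⟨(mkM k B A f a ⊗ₜ[ℤ] w : Abar k B A f ⊗[ℤ] Wpow (Abar k B A f) j), x,
            psi_succ_apply k B A f X j (mkM k B A f a) w x⟩
      | zero =>
        rw [TensorProduct.tmul_zero, map_zero]
        exact zero_mem _
      | add u v _ _ ihu ihv =>
        rw [TensorProduct.tmul_add, map_add]
        exact add_mem ihu ihv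
      | neg u _ ihu =>
        rw [TensorProduct.tmul_neg, map_neg]
        exact neg_mem ihu

lemma Yp_triv (m : ℕ) (hnil : Subsingleton (TPowB B (Abar k B A f) m)) :
    ∀ y : Yp k B A f X (m+1), y = 0 := by
  intro y
  have hy := Yp_gen k B A f X m y
  induction hy using AddSubgroup.closure_induction with
  | mem z hz =>
    obtain ⟨w, x, rfl⟩ := hz
    have hw : w ∈ RelW B (Abar k B A f) m := by
      have h1 : (Submodule.Quotient.mk w : TPowB B (Abar k B A f) m) =
          Submodule.Quotient.mk (0 : Wpow (Abar k B A f) m) :=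
        @Subsingleton.elim _ hnil _ _
      have h2 := (Submodule.Quotient.eq (RelW B (Abar k B A f) m)).mp h1
      simpa using h2
    exact psi_rel k B A f X m hw x
  | zero => rfl
  | add u v _ _ ihu ihv => rw [ihu, ihv, add_zero]
  | neg u _ ihu => rw [ihu, neg_zero]

lemma Ti_triv (i : ℕ) (h : ∀ y : Yp k B A f X i, y = 0) :
    ∀ t : Ti k B A f X i, t = 0 := by
  intro t
  induction t using Ti_ind with
  | h0 => rfl
  | hadd y z hy hz => rw [hy, hz, add_zero]
  | hgen a y => rw [h y, TensorProduct.tmul_zero, map_zero]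

theorem stmt16 (hf : Function.Injective f)
    (hbim : ∀ (b b' : B) (x : A), (b ⊗ₜ[k] (MulOpposite.op b')) • x = f b * x * f b')
    (hBX : ∀ (b : B) (x : X), b • x = f b • x)
    (n : ℕ) (hn : 1 ≤ n)
    -- `(A/B)^{⊗_B n} = 0`
    (hnil : Subsingleton (TPowB B (Abar k B A f) (n - 1)))
    -- `A/B` is projective as a right `B`-module
    (hproj : Module.Projective Bᵐᵒᵖ (Abar k B A f)) :
    -- there is an exact sequence of left `A`-modules
    -- `0 → A ⊗_B Y_{n-1} → ⋯ → A ⊗_B Y_0 → X → 0`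
    ∃ (g : ∀ i : ℕ, Ti k B A f X (i+1) →ₗ[A] Ti k B A f X i)
      (g0 : Ti k B A f X 0 →ₗ[A] X),
      Function.Surjective ⇑g0 ∧
      Function.Exact ⇑(g 0) ⇑g0 ∧
      (∀ i : ℕ, i + 2 < n → Function.Exact ⇑(g (i+1)) ⇑(g i)) ∧
      (if n = 1 then Function.Injective ⇑g0 else Function.Injective ⇑(g (n-2))) := by


  classical
  refine ⟨dmap k B A f X hbim hBX, g0map k B A f X hBX, ?_, ?_, ?_, ?_⟩
  · -- surjectivity of g0
    intro x
    exact ⟨sigma0 k B A f X x, by rw [sigma0_apply, g0_gen, one_smul]⟩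
  · -- exactness at Ti 0
    intro t
    constructor
    · intro ht
      refine ⟨smap k B A f X hbim 0 t, ?_⟩
      have h := homot0 k B A f X hbim hBX t
      rw [ht, map_zero, zero_add] at h
      exact h
    · rintro ⟨u, rfl⟩
      exact g0d k B A f X hbim hBX u
  · -- exactness in the middle
    intro i _
    intro t
    constructor
    · intro ht
      refine ⟨smap k B A f X hbim (i+1) t, ?_⟩
      have h := homotS k B A f X hbim hBX i t
      rw [ht, map_zero, zero_add] at h
      exact h
    · rintro ⟨u, rfl⟩
      exact ddz k B A f X hbim hBX i u
  · -- injectivity at the top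
    obtain ⟨m, rfl⟩ : ∃ m, n = m + 1 := ⟨n - 1, (Nat.succ_pred_eq_of_pos hn).symm⟩
    have hnil' : Subsingleton (TPowB B (Abar k B A f) m) := by simpa using hnil
    have hTn : ∀ t : Ti k B A f X (m+1), t = 0 :=
      Ti_triv k B A f X (m+1) (Yp_triv k B A f X m hnil')
    split_ifs with h1
    · -- n = 1, i.e. m = 0
      have hm : m = 0 := by omega
      subst hm
      intro t₁ t₂ ht
      have e₁ := homot0 k B A f X hbim hBX t₁
      have e₂ := homot0 k B A f X hbim hBX t₂
      rw [ht] at e₁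
      rw [hTn (smap k B A f X hbim 0 t₁), map_zero, add_zero] at e₁
      rw [hTn (smap k B A f X hbim 0 t₂), map_zero, add_zero] at e₂
      exact e₁.symm.trans e₂
    · -- n ≥ 2
      obtain ⟨r, rfl⟩ : ∃ r, m = r + 1 := ⟨m - 1, by omega⟩
      show Function.Injective ⇑(dmap k B A f X hbim hBX r)
      intro t₁ t₂ ht
      have e₁ := homotS k B A f X hbim hBX r t₁
      have e₂ := homotS k B A f X hbim hBX r t₂
      rw [ht] at e₁
      rw [hTn (smap k B A f X hbim (r+1) t₁), map_zero, add_zero] at e₁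
      rw [hTn (smap k B A f X hbim (r+1) t₂), map_zero, add_zero] at e₂
      exact e₁.symm.trans e₂

end
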